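/- Let C be a convex set that is linearly closed, linearly bounded, and such that every point of C is either in the relative algebraic interior of C or an extreme point of C. Then every point of C is a convex combination of at most two extreme points of C. -/

import Mathlib

open Set

def LinearlyClosed {W : Type*} [AddCommGroup W] [Module ℝ W] (C : Set W) : Prop :=
  ∀ a v : W, IsClosed {t : ℝ | a + t • v ∈ C}

def LinearlyBounded {W : Type*} [AddCommGroup W] [Module ℝ W] (C : Set W) : Prop :=
  ∀ a v : W, v ≠ 0 → Bornology.IsBounded {t : ℝ | a + t • v ∈ C}

def relAlgInterior {V : Type*} [AddCommGroup V] [Module ℝ V] (C : Set V) : Set V :=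
  {u ∈ C | ∀ v ∈ C, v ≠ u → ∃ z ∈ C, u ∈ openSegment ℝ v z}

lemma aux_not_relAlgInt {V : Type*} [AddCommGroup V] [Module ℝ V]
    {C : Set V} {x v : V} {c β : ℝ}
    (hc : x + c • v ∈ C) (hcβ : c < β)
    (hmax : ∀ t : ℝ, x + t • v ∈ C → t ≤ β) :
    x + β • v ∉ relAlgInterior C := by
  rintro ⟨huC, hu⟩
  have hv : v ≠ 0 := by
    rintro rfl
    have := hmax (β + 1) (by simpa using (by simpa using hc))
    linarith
  have hne : x + c • v ≠ x + β • v := by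
    intro h
    have : (c - β) • v = 0 := by
      have := add_left_cancel h
      rw [sub_smul, this, sub_self]
    rcases smul_eq_zero.1 this with h1 | h1
    · exact (sub_ne_zero.2 (ne_of_lt hcβ)) h1
    · exact hv h1
  obtain ⟨z, hzC, a, b, ha, hb, hab, hsum⟩ := hu (x + c • v) hc hne
  set γ : ℝ := (β - a * c) / b with hγ
  have hbγ : b * γ = β - a * c := by rw [hγ, mul_div_assoc', mul_div_cancel_left₀ _ (ne_of_gt hb)]
  have hz' : x + γ • v = z := by
    apply smul_right_injective V (ne_of_gt hb)
    show b • (x + γ • v) = b • z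
    have h1 : b • z = (x + β • v) - a • (x + c • v) := by
      rw [← hsum]; abel
    rw [h1]
    have h2 : (1 : ℝ) - a = b := by linarith
    match_scalars
    · linarith
    · linear_combination hbγ
  have hγβ : γ ≤ β := hmax γ (hz' ▸ hzC)
  have h3 : β - a * c ≤ b * β := hbγ ▸ mul_le_mul_of_nonneg_left hγβ hb.le
  have h4 : b * β = β - a * β := by
    have hb1 : b = 1 - a := by linarith
    rw [hb1]; ring
  nlinarith [mul_pos ha (sub_pos.2 hcβ)]

theorem convexComb_two_extremePoints
    {V : Type*} [AddCommGroup V] [Module ℝ V]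
    {C : Set V} (hC : Convex ℝ C) (hne : C.Nonempty)
    (hcl : LinearlyClosed C) (hbd : LinearlyBounded C)
    (hstruct : ∀ x ∈ C, x ∈ relAlgInterior C ∨ x ∈ C.extremePoints ℝ) :
    ∀ x ∈ C, ∃ u ∈ C.extremePoints ℝ, ∃ v ∈ C.extremePoints ℝ, ∃ t ∈ Set.Icc (0:ℝ) 1,
      x = t • u + (1 - t) • v := by
  intro x hx
  by_cases hy : ∃ y ∈ C, y ≠ x
  · obtain ⟨y, hyC, hyx⟩ := hy
    set v : V := y - x with hvdef
    have hv0 : v ≠ 0 := sub_ne_zero.2 hyx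
    set S : Set ℝ := {t : ℝ | x + t • v ∈ C} with hSdef
    have hScl : IsClosed S := hcl x v
    have hSbd : Bornology.IsBounded S := hbd x v hv0
    have h0S : (0:ℝ) ∈ S := by simp [hSdef, hx]
    have h1S : (1:ℝ) ∈ S := by
      show x + (1:ℝ) • v ∈ C
      rw [one_smul, hvdef, add_sub_cancel]
      exact hyC
    have hScp : IsCompact S := Metric.isCompact_of_isClosed_isBounded hScl hSbd
    have hSne : S.Nonempty := ⟨0, h0S⟩
    set α : ℝ := sInf S with hαdef
    set β : ℝ := sSup S with hβdef
    have hαS : α ∈ S := hScp.sInf_mem hSne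
    have hβS : β ∈ S := hScp.sSup_mem hSne
    have hub : ∀ t : ℝ, x + t • v ∈ C → t ≤ β := fun t ht => le_csSup hSbd.bddAbove ht
    have hlb : ∀ t : ℝ, x + t • v ∈ C → α ≤ t := fun t ht => csInf_le hSbd.bddBelow ht
    have h1β : 1 ≤ β := hub 1 h1S
    have hα0 : α ≤ 0 := hlb 0 h0S
    have hαβ : α < β := lt_of_le_of_lt hα0 (lt_of_lt_of_le one_pos h1β)
    -- endpoints of the chord through x and y are extreme points
    have hu2 : x + β • v ∈ C.extremePoints ℝ := by
      rcases hstruct _ hβS with h | h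
      · exact absurd h (aux_not_relAlgInt hαS hαβ hub)
      · exact h
    have hu1 : x + α • v ∈ C.extremePoints ℝ := by
      rcases hstruct _ hαS with h | h
      · exfalso
        have hmax' : ∀ t : ℝ, x + t • (-v) ∈ C → t ≤ -α := by
          intro t ht
          have : x + (-t) • v ∈ C := by rwa [neg_smul, ← smul_neg]
          linarith [hlb (-t) this]
        have hc' : x + (-β) • (-v) ∈ C := by rwa [neg_smul, smul_neg, neg_neg]
        have := aux_not_relAlgInt (C := C) hc' (by linarith : -β < -α) hmax'
        rw [smul_neg, neg_smul, neg_neg] at this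
        exact this h
      · exact h
    refine ⟨x + α • v, hu1, x + β • v, hu2, β / (β - α), ⟨?_, ?_⟩, ?_⟩
    · exact div_nonneg (by linarith) (by linarith)
    · rw [div_le_one (by linarith)]; linarith
    · have hβα : β - α ≠ 0 := by linarith
      match_scalars <;> (field_simp; ring)
  · push_neg at hy
    have hxe : x ∈ C.extremePoints ℝ :=
      ⟨hx, fun x1 hx1 x2 hx2 _ => hy x1 hx1⟩
    exact ⟨x, hxe, x, hxe, 1, ⟨zero_le_one, le_refl 1⟩, by simp⟩
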